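/- For every even integer n ≥ 2, the polynomial X^n − X − 1 has exactly two real roots, i.e. the set {x ∈ ℝ : x^n − x − 1 = 0} has exactly two elements. -/

import Mathlib

open Polynomial Set

/-- For every even integer `n ≥ 2`, the polynomial `X^n - X - 1` has exactly two real
roots. -/
theorem even_exactly_two_real_roots (n : ℕ) (hn : 2 ≤ n) (heven : Even n) :
    {x : ℝ | x ^ n - x - 1 = 0}.ncard = 2 := by
  set f : ℝ → ℝ := fun x => x ^ n - x - 1 with hfdef
  have hcont : Continuous f := by fun_prop
  have hconv : StrictConvexOn ℝ (Set.univ : Set ℝ) f := by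
    have h1 : StrictConvexOn ℝ (Set.univ : Set ℝ) fun x : ℝ => x ^ n :=
      heven.strictConvexOn_pow (by omega)
    have h2 : ConvexOn ℝ (Set.univ : Set ℝ) fun x : ℝ => -x - 1 := by
      have := (concaveOn_id (convex_univ (𝕜 := ℝ) (E := ℝ))).neg
      exact this.sub (concaveOn_const _ convex_univ)
    have h3 := h1.add_convexOn h2
    have heq : f = (fun x : ℝ => x ^ n) + fun x : ℝ => -x - 1 := by
      funext x
      show x ^ n - x - 1 = x ^ n + (-x - 1)
      ring
    rw [heq]
    exact h3
  have key : ∀ p q r : ℝ, p < q → q < r → f p = 0 → f r = 0 → f q < 0 := by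
    intro p q r hpq hqr hp hr
    have h3 : (0:ℝ) < r - p := by linarith
    have hcomb := hconv.2 (mem_univ p) (mem_univ r) (by linarith : p ≠ r)
      (div_pos (by linarith : (0:ℝ) < r - q) h3)
      (div_pos (by linarith : (0:ℝ) < q - p) h3)
      (by field_simp; ring)
    have hq : ((r - q) / (r - p)) • p + ((q - p) / (r - p)) • r = q := by
      rw [smul_eq_mul, smul_eq_mul, div_mul_eq_mul_div, div_mul_eq_mul_div, ← add_div,
        div_eq_iff (ne_of_gt h3)]
      ring
    rw [hq, hp, hr] at hcomb
    simpa using hcomb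
  -- values
  have hfm1 : f (-1) = 1 := by
    simp [hfdef, heven.neg_one_pow]
  have hf0 : f 0 = -1 := by
    simp [hfdef, zero_pow (by omega : n ≠ 0)]
  have hf2 : (1:ℝ) ≤ f 2 := by
    have : (4:ℝ) ≤ 2 ^ n := by
      calc (4:ℝ) = 2 ^ 2 := by norm_num
      _ ≤ 2 ^ n := pow_le_pow_right₀ (by norm_num) hn
    simp only [hfdef]
    linarith
  obtain ⟨a, haI, ha⟩ := intermediate_value_Ioo' (by norm_num : (-1:ℝ) ≤ 0)
    hcont.continuousOn (by rw [hfm1, hf0]; constructor <;> norm_num : (0:ℝ) ∈ Ioo (f 0) (f (-1)))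
  obtain ⟨b, hbI, hb⟩ := intermediate_value_Ioo (by norm_num : (0:ℝ) ≤ 2)
    hcont.continuousOn (by rw [hf0]; constructor <;> [norm_num; linarith] : (0:ℝ) ∈ Ioo (f 0) (f 2))
  have hab : a < b := lt_trans haI.2 hbI.1
  have hS : {x : ℝ | x ^ n - x - 1 = 0} = {a, b} := by
    ext c
    simp only [mem_setOf_eq, mem_insert_iff, mem_singleton_iff]
    constructor
    · intro hc
      have hc' : f c = 0 := hc
      by_contra h
      push_neg at h
      obtain ⟨hca, hcb⟩ := h
      rcases lt_trichotomy c a with h1 | h1 | h1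
      · have := key c a b h1 hab hc' hb
        linarith [ha]
      · exact hca h1
      · rcases lt_trichotomy c b with h2 | h2 | h2
        · have := key a c b h1 h2 ha hb
          linarith
        · exact hcb h2
        · have := key a b c hab h2 ha hc'
          linarith [hb]
    · rintro (rfl | rfl)
      · exact ha
      · exact hb
  rw [hS]
  exact Set.ncard_pair (ne_of_lt hab)
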